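/- arXiv:1503.05382 — 2 statements merged into one kernel-verified Lean document; each statement's English description precedes it below -/
import Mathlib

section
/- Write $x = (x',x'') \in \mathbf{R}^{n-m} \times \mathbf{R}^m$ with $1 \le m \le n-2$, let $p \in (n-m,\infty)$ with $p > 2$, set $\beta = (p-n+m)/(p-1)$, and let $0 < \gamma < \beta$. Then there exists $\delta_c \in (0,1)$, depending only on $n$, $\gamma$ and $p$, such that the function $\hat u(x) = |x'|^{\beta} + |x''|^2 |x'|^{\gamma} - \frac{1}{2}|x'|^2$ satisfies $\frac{\Delta \hat u\, |\nabla \hat u|^2}{p-2} + \Delta_\infty \hat u \le 0$ pointwise on the open set $\{x : |x''| < 1,\ 0 < |x'| < \delta_c\}$. -/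
open Real Filter Set

noncomputable def pd {n : ℕ} (f : EuclideanSpace ℝ (Fin n) → ℝ) (i : Fin n)
    (x : EuclideanSpace ℝ (Fin n)) : ℝ :=
  fderiv ℝ f x (EuclideanSpace.single i 1)

noncomputable def pd2 {n : ℕ} (f : EuclideanSpace ℝ (Fin n) → ℝ) (i j : Fin n)
    (x : EuclideanSpace ℝ (Fin n)) : ℝ :=
  fderiv ℝ (fun y => pd f j y) x (EuclideanSpace.single i 1)

/-- The Laplacian `Δ f`. -/
noncomputable def lap {n : ℕ} (f : EuclideanSpace ℝ (Fin n) → ℝ)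
    (x : EuclideanSpace ℝ (Fin n)) : ℝ := ∑ i, pd2 f i i x

/-- The infinity-Laplacian `Δ_∞ f = ∑ ∂i f ∂j f ∂i∂j f`. -/
noncomputable def ilap {n : ℕ} (f : EuclideanSpace ℝ (Fin n) → ℝ)
    (x : EuclideanSpace ℝ (Fin n)) : ℝ := ∑ i, ∑ j, pd f i x * pd f j x * pd2 f i j x

/-- The norm of the gradient `|∇f|`. -/
noncomputable def gradNorm {n : ℕ} (f : EuclideanSpace ℝ (Fin n) → ℝ)
    (x : EuclideanSpace ℝ (Fin n)) : ℝ := Real.sqrt (∑ i, (pd f i x) ^ 2)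

/-- `|x'|`: the norm of the first `n - m` coordinates of `x`. -/
noncomputable def normP (n m : ℕ) (x : EuclideanSpace ℝ (Fin n)) : ℝ :=
  Real.sqrt (∑ i : Fin n, if (i : ℕ) < n - m then (x i) ^ 2 else 0)

/-- `|x''|`: the norm of the last `m` coordinates of `x`. -/
noncomputable def normS (n m : ℕ) (x : EuclideanSpace ℝ (Fin n)) : ℝ :=
  Real.sqrt (∑ i : Fin n, if (i : ℕ) < n - m then 0 else (x i) ^ 2)

open Topology

noncomputable def aV (n K : ℕ) (x : EuclideanSpace ℝ (Fin n)) : ℝ :=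
  ∑ i : Fin n, if (i : ℕ) < K then (x i) ^ 2 else 0

noncomputable def bV (n K : ℕ) (x : EuclideanSpace ℝ (Fin n)) : ℝ :=
  ∑ i : Fin n, if (i : ℕ) < K then 0 else (x i) ^ 2

noncomputable def LA (n K : ℕ) (x : EuclideanSpace ℝ (Fin n)) :
    EuclideanSpace ℝ (Fin n) →L[ℝ] ℝ :=
  ∑ i : Fin n, (if (i : ℕ) < K then 2 * x i else 0) • (EuclideanSpace.proj i)

noncomputable def LB (n K : ℕ) (x : EuclideanSpace ℝ (Fin n)) :
    EuclideanSpace ℝ (Fin n) →L[ℝ] ℝ :=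
  ∑ i : Fin n, (if (i : ℕ) < K then 0 else 2 * x i) • (EuclideanSpace.proj i)

lemma aV_nonneg (n K : ℕ) (x : EuclideanSpace ℝ (Fin n)) : 0 ≤ aV n K x :=
  Finset.sum_nonneg fun i _ => by split <;> positivity

lemma bV_nonneg (n K : ℕ) (x : EuclideanSpace ℝ (Fin n)) : 0 ≤ bV n K x :=
  Finset.sum_nonneg fun i _ => by split <;> positivity

lemma LA_apply (n K : ℕ) (x : EuclideanSpace ℝ (Fin n)) (j : Fin n) :
    LA n K x (EuclideanSpace.single j 1) = if (j : ℕ) < K then 2 * x j else 0 := by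
  simp only [LA, ContinuousLinearMap.sum_apply, ContinuousLinearMap.smul_apply,
    PiLp.proj_apply, EuclideanSpace.single_apply, smul_eq_mul]
  rw [Finset.sum_eq_single j]
  · simp
  · intro i _ hij; rw [if_neg hij, mul_zero]
  · simp

lemma LB_apply (n K : ℕ) (x : EuclideanSpace ℝ (Fin n)) (j : Fin n) :
    LB n K x (EuclideanSpace.single j 1) = if (j : ℕ) < K then 0 else 2 * x j := by
  simp only [LB, ContinuousLinearMap.sum_apply, ContinuousLinearMap.smul_apply,
    PiLp.proj_apply, EuclideanSpace.single_apply, smul_eq_mul]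
  rw [Finset.sum_eq_single j]
  · simp
  · intro i _ hij; rw [if_neg hij, mul_zero]
  · simp

lemma hasFDerivAt_aV (n K : ℕ) (x : EuclideanSpace ℝ (Fin n)) :
    HasFDerivAt (𝕜 := ℝ) (aV n K) (LA n K x) x := by
  have : HasFDerivAt (fun y : EuclideanSpace ℝ (Fin n) =>
      ∑ i : Fin n, if (i : ℕ) < K then (y i) ^ 2 else 0)
      (∑ i : Fin n, (if (i : ℕ) < K then 2 * x i else (0:ℝ)) • (EuclideanSpace.proj (𝕜 := ℝ) i)) x := by
    apply HasFDerivAt.fun_sum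
    intro i _
    by_cases h : (i : ℕ) < K
    · simp only [h, if_true]
      have hp : HasFDerivAt (fun y : EuclideanSpace ℝ (Fin n) => y i)
          (EuclideanSpace.proj (𝕜 := ℝ) i) x := by simpa using (EuclideanSpace.proj (𝕜 := ℝ) i).hasFDerivAt (x := x)
      have := (hasDerivAt_pow 2 (x i)).comp_hasFDerivAt x hp
      exact this.congr_fderiv (by simp)
    · simp only [h, if_false, zero_smul]
      exact hasFDerivAt_const 0 x
  exact this

lemma hasFDerivAt_bV (n K : ℕ) (x : EuclideanSpace ℝ (Fin n)) :
    HasFDerivAt (𝕜 := ℝ) (bV n K) (LB n K x) x := by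
  have : HasFDerivAt (fun y : EuclideanSpace ℝ (Fin n) =>
      ∑ i : Fin n, if (i : ℕ) < K then 0 else (y i) ^ 2)
      (∑ i : Fin n, (if (i : ℕ) < K then (0:ℝ) else 2 * x i) • (EuclideanSpace.proj (𝕜 := ℝ) i)) x := by
    apply HasFDerivAt.fun_sum
    intro i _
    by_cases h : (i : ℕ) < K
    · simp only [h, if_true, zero_smul]
      exact hasFDerivAt_const 0 x
    · simp only [h, if_false]
      have hp : HasFDerivAt (fun y : EuclideanSpace ℝ (Fin n) => y i)
          (EuclideanSpace.proj (𝕜 := ℝ) i) x := by simpa using (EuclideanSpace.proj (𝕜 := ℝ) i).hasFDerivAt (x := x)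
      have := (hasDerivAt_pow 2 (x i)).comp_hasFDerivAt x hp
      exact this.congr_fderiv (by simp)
  exact this

lemma continuous_aV (n K : ℕ) : Continuous (aV n K) := by
  apply continuous_finset_sum
  intro i _
  by_cases h : (i : ℕ) < K
  · simp only [h, if_true]
    exact ((EuclideanSpace.proj (𝕜 := ℝ) i).continuous).pow 2
  · simp only [h, if_false]; exact continuous_const

noncomputable def AfF (β γ s t : ℝ) : ℝ := β/2 * s ^ (β/2-1) + t * (γ/2 * s ^ (γ/2-1)) - 1/2
noncomputable def BfF (γ s : ℝ) : ℝ := s ^ (γ/2)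
noncomputable def AsF (β γ s t : ℝ) : ℝ :=
  β/2 * ((β/2-1) * s ^ (β/2-2)) + t * (γ/2 * ((γ/2-1) * s ^ (γ/2-2)))
noncomputable def AtF (γ s : ℝ) : ℝ := γ/2 * s ^ (γ/2-1)

section Deriv

variable {n K : ℕ} {β γ : ℝ} {x : EuclideanSpace ℝ (Fin n)}

lemma hasFDerivAt_uF (h : 0 < aV n K x) :
    HasFDerivAt (𝕜 := ℝ)
      (fun y => aV n K y ^ (β/2) + bV n K y * aV n K y ^ (γ/2) - 1/2 * aV n K y)
      (AfF β γ (aV n K x) (bV n K x) • LA n K x + BfF γ (aV n K x) • LB n K x) x := by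
  have ha := hasFDerivAt_aV n K x
  have hb := hasFDerivAt_bV n K x
  have h1 := (Real.hasDerivAt_rpow_const (p := β/2) (Or.inl (ne_of_gt h))).comp_hasFDerivAt x ha
  have h2' := (Real.hasDerivAt_rpow_const (p := γ/2) (Or.inl (ne_of_gt h))).comp_hasFDerivAt x ha
  have h2 := hb.fun_mul h2'
  have h3 := ha.const_mul (1/2 : ℝ)
  have H := (h1.fun_add h2).fun_sub h3
  refine H.congr_fderiv ?_
  ext v
  simp only [AfF, BfF, ContinuousLinearMap.add_apply, ContinuousLinearMap.coe_sub',
    Pi.sub_apply, ContinuousLinearMap.coe_smul', Pi.smul_apply, smul_eq_mul, Function.comp_apply]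
  ring

lemma hasFDerivAt_AfF (h : 0 < aV n K x) :
    HasFDerivAt (𝕜 := ℝ) (fun y => AfF β γ (aV n K y) (bV n K y))
      (AsF β γ (aV n K x) (bV n K x) • LA n K x + AtF γ (aV n K x) • LB n K x) x := by
  have ha := hasFDerivAt_aV n K x
  have hb := hasFDerivAt_bV n K x
  have h1 := ((Real.hasDerivAt_rpow_const (p := β/2-1)
      (Or.inl (ne_of_gt h))).comp_hasFDerivAt x ha).const_mul (β/2)
  have h2' := ((Real.hasDerivAt_rpow_const (p := γ/2-1)
      (Or.inl (ne_of_gt h))).comp_hasFDerivAt x ha).const_mul (γ/2)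
  have h2 := hb.fun_mul h2'
  have H := (h1.fun_add h2).fun_sub (hasFDerivAt_const (1/2 : ℝ) x)
  refine H.congr_fderiv ?_
  ext v
  rw [show (β/2-1-1 : ℝ) = β/2-2 by ring, show (γ/2-1-1 : ℝ) = γ/2-2 by ring]
  simp only [AsF, AtF, ContinuousLinearMap.add_apply, ContinuousLinearMap.coe_sub',
    Pi.sub_apply, ContinuousLinearMap.coe_smul', Pi.smul_apply, smul_eq_mul,
    ContinuousLinearMap.zero_apply, Function.comp_apply]
  ring

lemma hasFDerivAt_BfF (h : 0 < aV n K x) :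
    HasFDerivAt (𝕜 := ℝ) (fun y => BfF γ (aV n K y)) (AtF γ (aV n K x) • LA n K x) x := by
  have ha := hasFDerivAt_aV n K x
  exact (Real.hasDerivAt_rpow_const (p := γ/2) (Or.inl (ne_of_gt h))).comp_hasFDerivAt x ha

lemma pd_uF {u : EuclideanSpace ℝ (Fin n) → ℝ}
    (hu' : u = fun y => aV n K y ^ (β/2) + bV n K y * aV n K y ^ (γ/2) - 1/2 * aV n K y)
    (h : 0 < aV n K x) (j : Fin n) :
    pd u j x = 2 * x j *
      (if (j : ℕ) < K then AfF β γ (aV n K x) (bV n K x) else BfF γ (aV n K x)) := by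
  have H : HasFDerivAt (𝕜 := ℝ) u
      (AfF β γ (aV n K x) (bV n K x) • LA n K x + BfF γ (aV n K x) • LB n K x) x := by
    rw [hu']; exact hasFDerivAt_uF h
  rw [pd, H.fderiv]
  simp only [ContinuousLinearMap.add_apply, ContinuousLinearMap.coe_smul', Pi.smul_apply,
    smul_eq_mul, LA_apply, LB_apply]
  by_cases hj : (j : ℕ) < K <;> simp [hj] <;> ring

end Deriv

section Deriv2

variable {n K : ℕ} {β γ : ℝ} {x : EuclideanSpace ℝ (Fin n)}

lemma proj_single (i j : Fin n) :
    EuclideanSpace.proj (𝕜 := ℝ) j (EuclideanSpace.single i (1:ℝ)) =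
      if i = j then 1 else 0 := by
  rcases eq_or_ne i j with rfl | h
  · simp
  · simp [EuclideanSpace.single_apply, h, Ne.symm h]

lemma pd2_uF {u : EuclideanSpace ℝ (Fin n) → ℝ}
    (hu' : u = fun y => aV n K y ^ (β/2) + bV n K y * aV n K y ^ (γ/2) - 1/2 * aV n K y)
    (h : 0 < aV n K x) (i j : Fin n) :
    fderiv ℝ (fun y => pd u j y) x (EuclideanSpace.single i 1) =
      (if i = j then 2 * (if (j : ℕ) < K then AfF β γ (aV n K x) (bV n K x)
          else BfF γ (aV n K x)) else 0)
      + 4 * x i * x j * (if (i : ℕ) < K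
          then (if (j : ℕ) < K then AsF β γ (aV n K x) (bV n K x) else AtF γ (aV n K x))
          else (if (j : ℕ) < K then AtF γ (aV n K x) else 0)) := by
  have hopen : IsOpen {y : EuclideanSpace ℝ (Fin n) | 0 < aV n K y} :=
    isOpen_lt continuous_const (continuous_aV n K)
  have hmem := hopen.mem_nhds h
  have hp : HasFDerivAt (fun y : EuclideanSpace ℝ (Fin n) => y j)
      (EuclideanSpace.proj (𝕜 := ℝ) j) x := by
    simpa using (EuclideanSpace.proj (𝕜 := ℝ) j).hasFDerivAt (x := x)
  have hproj : HasFDerivAt (fun y : EuclideanSpace ℝ (Fin n) => 2 * y j)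
      ((2:ℝ) • EuclideanSpace.proj (𝕜 := ℝ) j) x := hp.const_mul 2
  by_cases hj : (j : ℕ) < K
  · have heq : (fun y => pd u j y) =ᶠ[𝓝 x]
        fun y => 2 * y j * AfF β γ (aV n K y) (bV n K y) := by
      filter_upwards [hmem] with y hy
      rw [pd_uF hu' hy j, if_pos hj]
    rw [heq.fderiv_eq]
    have H := hproj.fun_mul (hasFDerivAt_AfF (β := β) (γ := γ) h)
    rw [H.fderiv]
    simp only [ContinuousLinearMap.add_apply, ContinuousLinearMap.coe_smul', Pi.smul_apply,
      smul_eq_mul, LA_apply, LB_apply, proj_single]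
    rcases eq_or_ne i j with rfl | hij
    · simp only [hj, if_true, if_pos rfl]; ring
    · by_cases hi : (i : ℕ) < K <;>
        simp only [hj, hi, hij, if_true, if_false, if_neg hij] <;> ring
  · have heq : (fun y => pd u j y) =ᶠ[𝓝 x] fun y => 2 * y j * BfF γ (aV n K y) := by
      filter_upwards [hmem] with y hy
      rw [pd_uF hu' hy j, if_neg hj]
    rw [heq.fderiv_eq]
    have H := hproj.fun_mul (hasFDerivAt_BfF (γ := γ) h)
    rw [H.fderiv]
    simp only [ContinuousLinearMap.add_apply, ContinuousLinearMap.coe_smul', Pi.smul_apply,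
      smul_eq_mul, LA_apply, LB_apply, proj_single]
    rcases eq_or_ne i j with rfl | hij
    · simp only [hj, if_false, if_true, if_pos rfl, eq_false hj]; ring
    · by_cases hi : (i : ℕ) < K <;>
        simp only [eq_false hj, hi, if_true, if_false, if_neg hij] <;> ring

end Deriv2

section Sums

variable {n K : ℕ} {x : EuclideanSpace ℝ (Fin n)}

lemma sum_split (c1 c2 : ℝ) :
    ∑ i : Fin n, (if (i : ℕ) < K then (x i) ^ 2 * c1 else (x i) ^ 2 * c2)
      = aV n K x * c1 + bV n K x * c2 := by
  have h : ∀ i : Fin n, (if (i : ℕ) < K then (x i) ^ 2 * c1 else (x i) ^ 2 * c2)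
      = (if (i : ℕ) < K then (x i) ^ 2 else 0) * c1
        + (if (i : ℕ) < K then 0 else (x i) ^ 2) * c2 := by
    intro i; split <;> ring
  rw [Finset.sum_congr rfl fun i _ => h i, Finset.sum_add_distrib, ← Finset.sum_mul,
    ← Finset.sum_mul, aV, bV]

lemma card_lt_filter (hK : K ≤ n) :
    (Finset.univ.filter fun i : Fin n => (i : ℕ) < K).card = K := by
  classical
  rw [Finset.card_filter, Fin.sum_univ_eq_sum_range (fun j => if j < K then 1 else 0),
    ← Finset.sum_filter]
  have h : (Finset.range n).filter (fun j => j < K) = Finset.range K := by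
    ext j; simp; omega
  simp [h]

lemma card_ge_filter (hK : K ≤ n) :
    (Finset.univ.filter fun i : Fin n => ¬ (i : ℕ) < K).card = n - K := by
  classical
  have h := Finset.card_filter_add_card_filter_not
    (s := (Finset.univ : Finset (Fin n))) (p := fun i : Fin n => (i : ℕ) < K)
  rw [card_lt_filter hK, Finset.card_univ, Fintype.card_fin] at h
  omega

lemma sum_consts (hK : K ≤ n) (c d : ℝ) :
    ∑ i : Fin n, (if (i : ℕ) < K then c else d) = K * c + ((n - K : ℕ) : ℝ) * d := by
  classical
  rw [Finset.sum_ite, Finset.sum_const, Finset.sum_const, card_lt_filter hK,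
    card_ge_filter hK, nsmul_eq_mul, nsmul_eq_mul]

end Sums

section Sums2

variable {n K : ℕ} {x : EuclideanSpace ℝ (Fin n)}

lemma sumLap (hK : K ≤ n) (Af Bf As At : ℝ) :
    ∑ i : Fin n, ((if i = i then 2 * (if (i : ℕ) < K then Af else Bf) else 0)
        + 4 * x i * x i * (if (i : ℕ) < K
            then (if (i : ℕ) < K then As else At) else (if (i : ℕ) < K then At else 0)))
      = 2 * K * Af + 4 * aV n K x * As + 2 * ((n - K : ℕ) : ℝ) * Bf := by
  have h : ∀ i : Fin n, ((if i = i then 2 * (if (i : ℕ) < K then Af else Bf) else 0)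
        + 4 * x i * x i * (if (i : ℕ) < K
            then (if (i : ℕ) < K then As else At) else (if (i : ℕ) < K then At else 0)))
      = (if (i : ℕ) < K then 2 * Af else 2 * Bf)
        + (if (i : ℕ) < K then (x i) ^ 2 * (4 * As) else (x i) ^ 2 * 0) := by
    intro i
    by_cases hi : (i : ℕ) < K <;> simp only [hi, if_true, if_false, if_pos rfl] <;> ring
  rw [Finset.sum_congr rfl fun i _ => h i, Finset.sum_add_distrib, sum_consts hK,
    sum_split (4 * As) 0]
  ring

lemma sumGrad (Af Bf : ℝ) :
    ∑ i : Fin n, (2 * x i * (if (i : ℕ) < K then Af else Bf)) ^ 2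
      = 4 * aV n K x * Af ^ 2 + 4 * bV n K x * Bf ^ 2 := by
  have h : ∀ i : Fin n, (2 * x i * (if (i : ℕ) < K then Af else Bf)) ^ 2
      = (if (i : ℕ) < K then (x i) ^ 2 * (4 * Af ^ 2) else (x i) ^ 2 * (4 * Bf ^ 2)) := by
    intro i
    by_cases hi : (i : ℕ) < K <;> simp only [hi, if_true, if_false] <;> ring
  rw [Finset.sum_congr rfl fun i _ => h i, sum_split]
  ring

lemma sumIlap (Af Bf As At : ℝ) :
    ∑ i : Fin n, ∑ j : Fin n,
        (2 * x i * (if (i : ℕ) < K then Af else Bf))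
          * (2 * x j * (if (j : ℕ) < K then Af else Bf))
          * ((if i = j then 2 * (if (j : ℕ) < K then Af else Bf) else 0)
            + 4 * x i * x j * (if (i : ℕ) < K
                then (if (j : ℕ) < K then As else At)
                else (if (j : ℕ) < K then At else 0)))
      = 8 * aV n K x * Af ^ 3 + 16 * (aV n K x) ^ 2 * Af ^ 2 * As
        + 32 * aV n K x * bV n K x * Af * Bf * At + 8 * bV n K x * Bf ^ 3 := by
  classical
  have hinner : ∀ i : Fin n, ∑ j : Fin n,
        (2 * x i * (if (i : ℕ) < K then Af else Bf))
          * (2 * x j * (if (j : ℕ) < K then Af else Bf))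
          * ((if i = j then 2 * (if (j : ℕ) < K then Af else Bf) else 0)
            + 4 * x i * x j * (if (i : ℕ) < K
                then (if (j : ℕ) < K then As else At)
                else (if (j : ℕ) < K then At else 0)))
      = (if (i : ℕ) < K
          then (x i) ^ 2 * (8 * Af ^ 3 + 16 * Af * (aV n K x * Af * As + bV n K x * Bf * At))
          else (x i) ^ 2 * (8 * Bf ^ 3 + 16 * Bf * (aV n K x * Af * At))) := by
    intro i
    have hsplit : ∀ j : Fin n,
        (2 * x i * (if (i : ℕ) < K then Af else Bf))
          * (2 * x j * (if (j : ℕ) < K then Af else Bf))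
          * ((if i = j then 2 * (if (j : ℕ) < K then Af else Bf) else 0)
            + 4 * x i * x j * (if (i : ℕ) < K
                then (if (j : ℕ) < K then As else At)
                else (if (j : ℕ) < K then At else 0)))
        = (if i = j then
            (2 * x i * (if (i : ℕ) < K then Af else Bf))
              * (2 * x j * (if (j : ℕ) < K then Af else Bf))
              * (2 * (if (j : ℕ) < K then Af else Bf)) else 0)
          + (if (j : ℕ) < K
              then (x j) ^ 2 * ((2 * x i * (if (i : ℕ) < K then Af else Bf)) * 8 * x i * Af
                  * (if (i : ℕ) < K then As else At))
              else (x j) ^ 2 * ((2 * x i * (if (i : ℕ) < K then Af else Bf)) * 8 * x i * Bf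
                  * (if (i : ℕ) < K then At else 0))) := by
      intro j
      by_cases hij : i = j <;> by_cases hj : (j : ℕ) < K <;>
        simp only [hij, hj, if_true, if_false, if_pos rfl, if_neg] <;> ring
    rw [Finset.sum_congr rfl fun j _ => hsplit j, Finset.sum_add_distrib,
      Finset.sum_ite_eq, sum_split]
    simp only [Finset.mem_univ, if_true]
    by_cases hi : (i : ℕ) < K <;> simp only [hi, if_true, if_false] <;> ring
  rw [Finset.sum_congr rfl fun i _ => hinner i, sum_split]
  ring

end Sums2

lemma rpow_cond {a c e : ℝ} (ha : 0 < a) (hc : 0 < c) (he : 0 < e) (h : a ≤ c ^ (1/e)) :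
    a ^ e ≤ c := by
  have h2 : a ^ e ≤ (c ^ (1/e)) ^ e := Real.rpow_le_rpow ha.le h he.le
  rwa [← Real.rpow_mul hc.le, one_div_mul_cancel he.ne', Real.rpow_one] at h2

set_option maxHeartbeats 2000000 in
lemma keyIneq (k' m' : ℕ) (hk : 2 ≤ k') (hm : 1 ≤ m') (p β γ : ℝ)
    (hpk : (k' : ℝ) < p) (hp2 : 2 < p) (hβ : β = (p - k') / (p - 1))
    (hγ0 : 0 < γ) (hγβ : γ < β) :
    ∃ δ : ℝ, 0 < δ ∧ δ < 1 ∧ ∀ a b : ℝ, 0 < a → a < δ ^ 2 → 0 ≤ b → b < 1 →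
      (2*k'*AfF β γ a b + 4*a*AsF β γ a b + 2*m'*BfF γ a)
          * (4*a*(AfF β γ a b)^2 + 4*b*(BfF γ a)^2)
        + (p-2) * (8*a*(AfF β γ a b)^3 + 16*a^2*(AfF β γ a b)^2*AsF β γ a b
            + 32*a*b*(AfF β γ a b)*(BfF γ a)*(AtF γ a) + 8*b*(BfF γ a)^3) ≤ 0 := by
  have hp1 : (1:ℝ) < p := by linarith
  have hk2 : (2:ℝ) ≤ (k' : ℝ) := by exact_mod_cast hk
  have hm1 : (1:ℝ) ≤ (m' : ℝ) := by exact_mod_cast hm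
  have hne : p - 1 ≠ 0 := by intro h; rw [sub_eq_zero] at h; linarith
  have hβe : (p - 1) * β = p - k' := by
    rw [hβ]; field_simp
  have hβ0 : 0 < β := by
    rw [hβ]; apply div_pos <;> linarith
  have hβ1 : β < 1 := by
    rw [hβ, div_lt_one (by linarith : (0:ℝ) < p - 1)]; linarith
  have hc0 : 0 < γ/2*(p-1)*(β-γ) := by
    apply mul_pos (mul_pos (by linarith) (by linarith)); linarith
  set c0 : ℝ := γ/2*(p-1)*(β-γ) with hc0def
  have hC2 : 0 < β/2*((k':ℝ)+β-2) + γ/2*((k':ℝ)+γ-2) + ((m':ℝ)+p-2) := by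
    have h1 : 0 ≤ β/2*((k':ℝ)+β-2) := by
      apply mul_nonneg (by linarith); linarith
    have h2 : 0 ≤ γ/2*((k':ℝ)+γ-2) := by
      apply mul_nonneg (by linarith); linarith
    have h3 : (0:ℝ) < (m':ℝ)+p-2 := by linarith
    linarith
  set C2 : ℝ := β/2*((k':ℝ)+β-2) + γ/2*((k':ℝ)+γ-2) + ((m':ℝ)+p-2) with hC2def
  have hC5 : 0 < C2 + (p-2)*γ*(β+γ) := by
    have : 0 ≤ (p-2)*γ*(β+γ) := by
      apply mul_nonneg (mul_nonneg (by linarith) (by linarith)); linarith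
    linarith
  set C5 : ℝ := C2 + (p-2)*γ*(β+γ) with hC5def
  set c2' : ℝ := ((k'+p-2)/(4*m')) ^ ((1:ℝ)/(γ/2)) with hc2'def
  set c3' : ℝ := (β/2) ^ ((1:ℝ)/(1-β/2)) with hc3'def
  set c4' : ℝ := (c0*β^2/(16*C5)) ^ ((1:ℝ)/(1+γ-β)) with hc4'def
  have hc2'pos : 0 < c2' := Real.rpow_pos_of_pos (div_pos (by linarith) (by positivity)) _
  have hc3'pos : 0 < c3' := Real.rpow_pos_of_pos (by linarith) _
  have hc4'pos : 0 < c4' :=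
    Real.rpow_pos_of_pos (div_pos (mul_pos hc0 (by positivity)) (by linarith)) _
  clear_value c0 C2 C5
  set a0 : ℝ := min (min (1/2) c2') (min c3' c4') with ha0def
  have ha0pos : 0 < a0 := by
    apply lt_min (lt_min (by norm_num) hc2'pos) (lt_min hc3'pos hc4'pos)
  have ha0half : a0 ≤ 1/2 := le_trans (min_le_left _ _) (min_le_left _ _)
  refine ⟨Real.sqrt a0, Real.sqrt_pos.mpr ha0pos, ?_, ?_⟩
  · nlinarith [Real.sq_sqrt ha0pos.le, Real.sqrt_nonneg a0]
  intro a b ha haδ hb0 hb1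
  rw [Real.sq_sqrt ha0pos.le] at haδ
  have ha1 : a < 1 := by linarith [ha0half]
  -- the basic powers
  set P : ℝ := a ^ (β/2-1) with hPdef
  set Q : ℝ := a ^ (γ/2-1) with hQdef
  have hPpos : 0 < P := Real.rpow_pos_of_pos ha _
  have hQpos : 0 < Q := Real.rpow_pos_of_pos ha _
  have hPQ : P ≤ Q := Real.rpow_le_rpow_of_exponent_ge ha ha1.le (by linarith)
  clear_value P Q
  -- smallness conditions
  have hmpos : (0:ℝ) < (m' : ℝ) := by linarith
  have hstep : ∀ u : ℝ, a ^ (1 + u) = a * a ^ u := by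
    intro u
    rw [Real.rpow_add ha, Real.rpow_one]
  have haQ : a ^ (γ/2) = a * Q := by
    rw [hQdef, ← hstep, show (1 + (γ/2 - 1) : ℝ) = γ/2 by ring]
  have haP : a ^ (β/2) = a * P := by
    rw [hPdef, ← hstep, show (1 + (β/2 - 1) : ℝ) = β/2 by ring]
  have haR1 : a * a ^ (β/2-2) = P := by
    rw [hPdef, ← hstep, show (1 + (β/2 - 2) : ℝ) = β/2-1 by ring]
  have haR2 : a * a ^ (γ/2-2) = Q := by
    rw [hQdef, ← hstep, show (1 + (γ/2 - 2) : ℝ) = γ/2-1 by ring]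
  have hC1 : (m' : ℝ) * (a * Q) ≤ (k'+p-2)/4 := by
    have h1 : a ^ (γ/2) ≤ (k'+p-2)/(4*m') := by
      apply rpow_cond ha (div_pos (by linarith) (by positivity)) (by linarith)
      calc a ≤ a0 := haδ.le
        _ ≤ c2' := le_trans (min_le_left _ _) (min_le_right _ _)
    have h3 := mul_le_mul_of_nonneg_left h1 hmpos.le
    rw [haQ] at h3
    have h4 : (m':ℝ) * ((k'+p-2)/(4*m')) = (k'+p-2)/4 := by
      field_simp
    linarith
  have hC3 : 1 ≤ β/2 * P := by
    have h1 : a ^ (1-β/2) ≤ β/2 := by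
      apply rpow_cond ha (by linarith) (by linarith)
      calc a ≤ a0 := haδ.le
        _ ≤ c3' := le_trans (min_le_right _ _) (min_le_left _ _)
    have h2 : a ^ (1-β/2 : ℝ) * P = 1 := by
      rw [hPdef, ← Real.rpow_add ha, show (1-β/2 + (β/2-1) : ℝ) = 0 by ring, Real.rpow_zero]
    have h3 := mul_le_mul_of_nonneg_right h1 hPpos.le
    rw [h2] at h3; exact h3
  have hC4 : a ^ (1+γ-β : ℝ) ≤ c0*β^2/(16*C5) := by
    apply rpow_cond ha (div_pos (mul_pos hc0 (pow_pos hβ0 2)) (by linarith)) (by linarith)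
    calc a ≤ a0 := haδ.le
      _ ≤ c4' := le_trans (min_le_right _ _) (min_le_right _ _)
  -- abbreviations
  set AF : ℝ := AfF β γ a b with hAFdef
  set BF : ℝ := BfF γ a with hBFdef
  set AT : ℝ := AtF γ a with hATdef
  have hAFval : AF = β/2 * P + b * (γ/2 * Q) - 1/2 := by
    rw [hAFdef]; simp only [AfF]; rw [← hPdef, ← hQdef]
  have hBFval : BF = a * Q := haQ
  have hATval : AT = γ/2 * Q := by
    rw [hATdef]; simp only [AtF]; rw [← hQdef]
  clear_value AF BF AT
  have hSAval : a * AsF β γ a b = β/2*((β/2-1)*P) + b*(γ/2*((γ/2-1)*Q)) := by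
    simp only [AsF]
    linear_combination (β/2*(β/2-1)) * haR1 + (b*(γ/2)*(γ/2-1)) * haR2
  -- bracket bounds
  have hB1 : (k'+p-2)*AF + 2*(p-1)*(a * AsF β γ a b) + m'*BF
      = -(c0*b*Q) - (k'+p-2)/2 + m'*(a*Q) := by
    rw [hSAval, hAFval, hBFval, hc0def]
    linear_combination (β/2*P + γ/2*b*Q) * hβe
  have hB1le : (k'+p-2)*AF + 2*(p-1)*(a * AsF β γ a b) + m'*BF ≤ -(c0*b*Q) := by
    rw [hB1]; linarith
  have hB2 : k'*AF + 2*(a * AsF β γ a b) + (m'+p-2)*BF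
      = β/2*(k'+β-2)*P + b*(γ/2*(k'+γ-2))*Q - k'/2 + (m'+p-2)*(a*Q) := by
    rw [hSAval, hAFval, hBFval]; ring
  have hB2le : k'*AF + 2*(a * AsF β γ a b) + (m'+p-2)*BF ≤ C2 * Q := by
    rw [hB2, hC2def]
    have e1 : β/2*((k':ℝ)+β-2)*P ≤ β/2*((k':ℝ)+β-2)*Q :=
      mul_le_mul_of_nonneg_left hPQ (mul_nonneg (by linarith) (by linarith))
    have e2 : b*(γ/2*((k':ℝ)+γ-2))*Q ≤ γ/2*((k':ℝ)+γ-2)*Q := by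
      have hcoef : 0 ≤ γ/2*((k':ℝ)+γ-2)*Q := by
        apply mul_nonneg (mul_nonneg (by linarith) (by linarith)) hQpos.le
      linarith [mul_nonneg (by linarith : (0:ℝ) ≤ 1 - b) hcoef]
    have e3 : ((m':ℝ)+p-2)*(a*Q) ≤ ((m':ℝ)+p-2)*Q := by
      have h5 : a*Q ≤ Q := by
        have := mul_le_mul_of_nonneg_right ha1.le hQpos.le
        rwa [one_mul] at this
      exact mul_le_mul_of_nonneg_left h5 (by linarith)
    have e4 : (0:ℝ) ≤ k'/2 := by positivity
    linarith
  -- Af bounds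
  have hbQ : 0 ≤ b * (γ/2 * Q) := by positivity
  have hAFlb : β/4 * P ≤ AF := by rw [hAFval]; linarith [hC3, hbQ]
  have hAFpos : 0 < AF := by linarith [hAFlb, hC3]
  have hAFub : AF ≤ (β+γ)/2 * Q := by
    rw [hAFval]
    have e1 : β/2*P ≤ β/2*Q := mul_le_mul_of_nonneg_left hPQ (by linarith)
    have e2 : b * (γ/2*Q) ≤ γ/2*Q := by
      have h := mul_le_mul_of_nonneg_right hb1.le
        (mul_nonneg (by linarith : (0:ℝ) ≤ γ/2) hQpos.le)
      rwa [one_mul] at h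
    linarith
  have hAF2 : β^2/16 * (P*P) ≤ AF^2 := by
    have h0 : 0 ≤ β/4*P := mul_nonneg (by linarith) hPpos.le
    have h := mul_le_mul hAFlb hAFlb h0 (le_trans h0 hAFlb)
    calc β^2/16 * (P*P) = (β/4*P)*(β/4*P) := by ring
      _ ≤ AF*AF := h
      _ = AF^2 := by ring
  -- key comparison
  have he2 : a * (Q*Q) = a ^ (1+γ-β : ℝ) * (P*P) := by
    have u1 : a ^ (γ-1 : ℝ) = a * (Q*Q) := by
      rw [show (γ-1:ℝ) = 1 + ((γ/2-1) + (γ/2-1)) by ring, Real.rpow_add ha,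
        Real.rpow_add ha, Real.rpow_one, hQdef]
    have u2 : a ^ (γ-1 : ℝ) = a ^ (1+γ-β : ℝ) * (P*P) := by
      rw [show (γ-1:ℝ) = (1+γ-β) + ((β/2-1) + (β/2-1)) by ring, Real.rpow_add ha,
        Real.rpow_add ha, hPdef]
    rw [← u1, u2]
  have hKey : C5 * (a * (Q*Q)) ≤ c0*β^2/16 * (P*P) := by
    rw [he2]
    have := mul_le_mul_of_nonneg_right hC4 (by positivity : (0:ℝ) ≤ P*P)
    calc C5 * (a ^ (1+γ-β : ℝ) * (P*P)) ≤ C5 * (c0*β^2/(16*C5) * (P*P)) := by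
          apply mul_le_mul_of_nonneg_left _ hC5.le
          exact this
      _ = c0*β^2/16 * (P*P) := by field_simp
  -- assemble
  have hIdent : (2*k'*AF + 4*a*AsF β γ a b + 2*m'*BF) * (4*a*AF^2 + 4*b*BF^2)
        + (p-2) * (8*a*AF^3 + 16*a^2*AF^2*AsF β γ a b + 32*a*b*AF*BF*AT + 8*b*BF^3)
      = 8 * (a*AF^2*((k'+p-2)*AF + 2*(p-1)*(a*AsF β γ a b) + m'*BF)
          + b*BF^2*(k'*AF + 2*(a*AsF β γ a b) + (m'+p-2)*BF)
          + 4*(p-2)*(a*b*AF*BF*AT)) := by ring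
  rw [hIdent]
  have t1 : a*AF^2*((k'+p-2)*AF + 2*(p-1)*(a*AsF β γ a b) + m'*BF)
      ≤ a*AF^2*(-(c0*b*Q)) :=
    mul_le_mul_of_nonneg_left hB1le (mul_nonneg ha.le (sq_nonneg AF))
  have t2 : b*BF^2*(k'*AF + 2*(a*AsF β γ a b) + (m'+p-2)*BF) ≤ b*BF^2*(C2*Q) :=
    mul_le_mul_of_nonneg_left hB2le (mul_nonneg hb0 (sq_nonneg BF))
  have t3 : 4*(p-2)*(a*b*AF*BF*AT) ≤ 4*(p-2)*(a*b*((β+γ)/2*Q)*BF*AT) := by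
    have hfac : 0 ≤ 4*(p-2)*(a*b*BF*AT) := by
      rw [hBFval, hATval]
      apply mul_nonneg (mul_nonneg (by norm_num : (0:ℝ) ≤ 4) (by linarith : (0:ℝ) ≤ p - 2))
      apply mul_nonneg (mul_nonneg (mul_nonneg ha.le hb0) (mul_nonneg ha.le hQpos.le))
      exact mul_nonneg (by linarith : (0:ℝ) ≤ γ/2) hQpos.le
    linarith [mul_le_mul_of_nonneg_left hAFub hfac]
  have hfinal : a*AF^2*(-(c0*b*Q)) + b*BF^2*(C2*Q) + 4*(p-2)*(a*b*((β+γ)/2*Q)*BF*AT) ≤ 0 := by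
    rw [hBFval, hATval]
    have key2 : C5 * (a * (Q*Q)) * (a*b*Q) ≤ c0*β^2/16 * (P*P) * (a*b*Q) :=
      mul_le_mul_of_nonneg_right hKey
        (mul_nonneg (mul_nonneg ha.le hb0) hQpos.le)
    have key3 : c0 * (β^2/16 * (P*P)) * (a*b*Q) ≤ c0 * AF^2 * (a*b*Q) := by
      apply mul_le_mul_of_nonneg_right _ (mul_nonneg (mul_nonneg ha.le hb0) hQpos.le)
      exact mul_le_mul_of_nonneg_left hAF2 hc0.le
    rw [hC5def] at key2
    linarith [key2, key3]
  linarith [t1, t2, t3, hfinal]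

/-- existence of `δ_c ∈ (0,1)` such that
`û = |x'|^β + |x''|²|x'|^γ - |x'|²/2` satisfies `Δû |∇û|²/(p-2) + Δ_∞ û ≤ 0`
on `{x : |x''| < 1, 0 < |x'| < δ_c}`. -/
theorem statement7 (n m : ℕ) (hm1 : 1 ≤ m) (hm2 : m ≤ n - 2) (hn : 2 ≤ n)
    (p : ℝ) (hp : (n : ℝ) - m < p) (hp2 : 2 < p)
    (β γ : ℝ) (hβ : β = (p - n + m) / (p - 1)) (hγ0 : 0 < γ) (hγβ : γ < β)
    (u : EuclideanSpace ℝ (Fin n) → ℝ)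
    (hu : ∀ x, u x = normP n m x ^ β + (normS n m x) ^ 2 * normP n m x ^ γ
        - (1 / 2) * (normP n m x) ^ 2) :
    ∃ δc : ℝ, 0 < δc ∧ δc < 1 ∧
      ∀ x : EuclideanSpace ℝ (Fin n), normS n m x < 1 → 0 < normP n m x → normP n m x < δc →
        lap u x * gradNorm u x ^ 2 / (p - 2) + ilap u x ≤ 0 := by
  have hmn : m ≤ n := by omega
  have hk2 : 2 ≤ n - m := by omega
  have hcast : ((n - m : ℕ) : ℝ) = (n : ℝ) - m := by
    push_cast [Nat.cast_sub hmn]; ring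
  have hnk : n - (n - m) = m := by omega
  -- u in terms of aV, bV
  have hu' : u = fun y => aV n (n - m) y ^ (β/2)
      + bV n (n - m) y * aV n (n - m) y ^ (γ/2) - 1/2 * aV n (n - m) y := by
    funext y
    rw [hu y]
    have hA : normP n m y = Real.sqrt (aV n (n - m) y) := rfl
    have hB : normS n m y = Real.sqrt (bV n (n - m) y) := rfl
    have hAnn := aV_nonneg n (n - m) y
    have hBnn := bV_nonneg n (n - m) y
    rw [hA, hB, Real.sq_sqrt hBnn, Real.sq_sqrt hAnn, Real.sqrt_eq_rpow,
      ← Real.rpow_mul hAnn, ← Real.rpow_mul hAnn,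
      show (1/2*β : ℝ) = β/2 by ring, show (1/2*γ : ℝ) = γ/2 by ring]
  -- the scalar inequality
  obtain ⟨δ, hδ0, hδ1, hδ⟩ := keyIneq (n - m) m hk2 hm1 p β γ
    (by rw [hcast]; exact hp) hp2
    (by rw [hβ, hcast]; congr 1; ring) hγ0 hγβ
  refine ⟨δ, hδ0, hδ1, ?_⟩
  intro x hS hP0 hPδ
  have hA : normP n m x = Real.sqrt (aV n (n - m) x) := rfl
  have hBx : normS n m x = Real.sqrt (bV n (n - m) x) := rfl
  have hAnn := aV_nonneg n (n - m) x
  have hBnn := bV_nonneg n (n - m) x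
  have ha0 : 0 < aV n (n - m) x := by
    rw [hA] at hP0; exact Real.sqrt_pos.mp hP0
  have haδ : aV n (n - m) x < δ ^ 2 := by
    have h1 : normP n m x ^ 2 < δ ^ 2 :=
      pow_lt_pow_left₀ hPδ (by rw [hA]; exact Real.sqrt_nonneg _) (by norm_num)
    rwa [hA, Real.sq_sqrt hAnn] at h1
  have hb1 : bV n (n - m) x < 1 := by
    have h1 : normS n m x ^ 2 < 1 := by
      apply pow_lt_one₀ _ hS (by norm_num)
      rw [hBx]; exact Real.sqrt_nonneg _
    rwa [hBx, Real.sq_sqrt hBnn] at h1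
  set A := aV n (n - m) x with hAdef
  set B := bV n (n - m) x with hBdef
  set Af := AfF β γ A B with hAfdef
  set Bf := BfF γ A with hBfdef
  set As := AsF β γ A B with hAsdef
  set At := AtF γ A with hAtdef
  -- identify the three differential quantities
  have hpd : ∀ j : Fin n, pd u j x
      = 2 * x j * (if (j : ℕ) < n - m then Af else Bf) := fun j => pd_uF hu' ha0 j
  have hpd2 : ∀ i j : Fin n, pd2 u i j x
      = (if i = j then 2 * (if (j : ℕ) < n - m then Af else Bf) else 0)
        + 4 * x i * x j * (if (i : ℕ) < n - m
            then (if (j : ℕ) < n - m then As else At)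
            else (if (j : ℕ) < n - m then At else 0)) := fun i j => pd2_uF hu' ha0 i j
  have hlap : lap u x = 2 * (n - m : ℕ) * Af + 4 * A * As + 2 * (m : ℕ) * Bf := by
    unfold lap
    rw [Finset.sum_congr rfl fun i _ => hpd2 i i, sumLap (by omega) Af Bf As At, hnk]
  have hgrad : gradNorm u x ^ 2 = 4 * A * Af ^ 2 + 4 * B * Bf ^ 2 := by
    unfold gradNorm
    rw [Real.sq_sqrt (Finset.sum_nonneg fun i _ => sq_nonneg _),
      Finset.sum_congr rfl fun i _ => by rw [hpd i], sumGrad Af Bf]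
  have hilap : ilap u x = 8 * A * Af ^ 3 + 16 * A ^ 2 * Af ^ 2 * As
      + 32 * A * B * Af * Bf * At + 8 * B * Bf ^ 3 := by
    unfold ilap
    rw [Finset.sum_congr rfl fun i _ => Finset.sum_congr rfl fun j _ => by
      rw [hpd i, hpd j, hpd2 i j], sumIlap Af Bf As At]
  have hN := hδ A B ha0 haδ hBnn hb1
  rw [← hAfdef, ← hBfdef, ← hAsdef, ← hAtdef] at hN
  rw [hlap, hgrad, hilap]
  have hp2' : (0:ℝ) < p - 2 := by linarith
  rw [div_add' _ _ _ (ne_of_gt hp2')]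
  apply div_nonpos_of_nonpos_of_nonneg _ hp2'.le
  linarith [hN]
end

section
/- Write $x = (x',x'') \in \mathbf{R}^{n-m} \times \mathbf{R}^m$ with $1 \le m \le n-2$, let $p \in (n-m,\infty)$ with $p > 2$, and set $\beta = (p-n+m)/(p-1)$. Then there exists $\delta_c \in (0,1)$, depending only on $n$ and $p$, such that the function $\check u(x) = (1 - |x''|^2)|x'|^{\beta} + |x'|$ satisfies $\frac{\Delta \check u\, |\nabla \check u|^2}{p-2} + \Delta_\infty \check u \ge 0$ pointwise on the open set $\{x : |x''| < 1,\ 0 < |x'| < \delta_c\}$. -/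
open Real Filter Set

open Topology

noncomputable def Qf (n m : ℕ) (x : EuclideanSpace ℝ (Fin n)) : ℝ :=
  ∑ i : Fin n, if (i : ℕ) < n - m then (x i) ^ 2 else 0

noncomputable def Sf (n m : ℕ) (x : EuclideanSpace ℝ (Fin n)) : ℝ :=
  ∑ i : Fin n, if (i : ℕ) < n - m then 0 else (x i) ^ 2

noncomputable def LQ (n m : ℕ) (x : EuclideanSpace ℝ (Fin n)) :
    EuclideanSpace ℝ (Fin n) →L[ℝ] ℝ :=
  ∑ i : Fin n, (if (i : ℕ) < n - m then 2 * x i else 0) • EuclideanSpace.proj i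

noncomputable def LS (n m : ℕ) (x : EuclideanSpace ℝ (Fin n)) :
    EuclideanSpace ℝ (Fin n) →L[ℝ] ℝ :=
  ∑ i : Fin n, (if (i : ℕ) < n - m then 0 else 2 * x i) • EuclideanSpace.proj i

theorem hasFDerivAt_Qf (n m : ℕ) (x : EuclideanSpace ℝ (Fin n)) :
    HasFDerivAt (Qf n m) (LQ n m x) x := by
  have h : ∀ i : Fin n, HasFDerivAt (fun y : EuclideanSpace ℝ (Fin n) =>
      if (i : ℕ) < n - m then (y i) ^ 2 else 0)
      ((if (i : ℕ) < n - m then 2 * x i else 0) • EuclideanSpace.proj (𝕜 := ℝ) i) x := by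
    intro i
    by_cases hi : (i : ℕ) < n - m
    · simp only [if_pos hi]
      have h1 : HasFDerivAt (fun y : EuclideanSpace ℝ (Fin n) => y i)
          (EuclideanSpace.proj (𝕜 := ℝ) i) x := by
        have := (EuclideanSpace.proj (𝕜 := ℝ) i).hasFDerivAt (x := x)
        simpa [PiLp.proj_apply] using this
      have := h1.mul h1
      have h2 : (fun y : EuclideanSpace ℝ (Fin n) => (y i) ^ 2)
          = fun y => y i * y i := by funext y; ring
      rw [h2]
      refine this.congr_fderiv ?_
      ext y
      simp
      ring
    · simp only [if_neg hi, zero_smul]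
      exact hasFDerivAt_const 0 x
  have := HasFDerivAt.fun_sum (fun i (_ : i ∈ Finset.univ) => h i)
  exact this

theorem hasFDerivAt_Sf (n m : ℕ) (x : EuclideanSpace ℝ (Fin n)) :
    HasFDerivAt (Sf n m) (LS n m x) x := by
  have h : ∀ i : Fin n, HasFDerivAt (fun y : EuclideanSpace ℝ (Fin n) =>
      if (i : ℕ) < n - m then 0 else (y i) ^ 2)
      ((if (i : ℕ) < n - m then 0 else 2 * x i) • EuclideanSpace.proj (𝕜 := ℝ) i) x := by
    intro i
    by_cases hi : (i : ℕ) < n - m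
    · simp only [if_pos hi, zero_smul]
      exact hasFDerivAt_const 0 x
    · simp only [if_neg hi]
      have h1 : HasFDerivAt (fun y : EuclideanSpace ℝ (Fin n) => y i)
          (EuclideanSpace.proj (𝕜 := ℝ) i) x := by
        have := (EuclideanSpace.proj (𝕜 := ℝ) i).hasFDerivAt (x := x)
        simpa [PiLp.proj_apply] using this
      have := h1.mul h1
      have h2 : (fun y : EuclideanSpace ℝ (Fin n) => (y i) ^ 2)
          = fun y => y i * y i := by funext y; ring
      rw [h2]
      refine this.congr_fderiv ?_
      ext y
      simp
      ring
  have := HasFDerivAt.fun_sum (fun i (_ : i ∈ Finset.univ) => h i)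
  exact this

theorem LQ_apply (n m : ℕ) (x : EuclideanSpace ℝ (Fin n)) (j : Fin n) :
    LQ n m x (EuclideanSpace.single j 1) = if (j : ℕ) < n - m then 2 * x j else 0 := by
  simp only [LQ, ContinuousLinearMap.sum_apply, ContinuousLinearMap.smul_apply,
    smul_eq_mul]
  rw [Finset.sum_congr rfl (fun i _ => ?_), Finset.sum_ite_eq' Finset.univ j
    (fun i => if (i : ℕ) < n - m then 2 * x i else 0)]
  · simp
  · show (if (i : ℕ) < n - m then 2 * x i else 0) * (EuclideanSpace.proj i) (EuclideanSpace.single j 1)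
      = if i = j then (if (i : ℕ) < n - m then 2 * x i else 0) else 0
    rw [PiLp.proj_apply, EuclideanSpace.single_apply]
    split_ifs <;> simp

theorem LS_apply (n m : ℕ) (x : EuclideanSpace ℝ (Fin n)) (j : Fin n) :
    LS n m x (EuclideanSpace.single j 1) = if (j : ℕ) < n - m then 0 else 2 * x j := by
  simp only [LS, ContinuousLinearMap.sum_apply, ContinuousLinearMap.smul_apply,
    smul_eq_mul]
  rw [Finset.sum_congr rfl (fun i _ => ?_), Finset.sum_ite_eq' Finset.univ j
    (fun i => if (i : ℕ) < n - m then 0 else 2 * x i)]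
  · simp
  · show (if (i : ℕ) < n - m then 0 else 2 * x i) * (EuclideanSpace.proj i) (EuclideanSpace.single j 1)
      = if i = j then (if (i : ℕ) < n - m then 0 else 2 * x i) else 0
    rw [PiLp.proj_apply, EuclideanSpace.single_apply]
    split_ifs <;> simp

noncomputable def Af (n m : ℕ) (c : ℝ) (x : EuclideanSpace ℝ (Fin n)) : ℝ :=
  (1 - Sf n m x) * (c * Qf n m x ^ (c - 1)) + (1/2) * Qf n m x ^ ((1:ℝ)/2 - 1)

noncomputable def Bf (n m : ℕ) (c : ℝ) (x : EuclideanSpace ℝ (Fin n)) : ℝ :=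
  -(Qf n m x ^ c)

noncomputable def Wf (n m : ℕ) (c : ℝ) (x : EuclideanSpace ℝ (Fin n)) : ℝ :=
  (1 - Sf n m x) * (c * ((c - 1) * Qf n m x ^ (c - 1 - 1)))
    + (1/2) * (((1:ℝ)/2 - 1) * Qf n m x ^ ((1:ℝ)/2 - 1 - 1))

noncomputable def Vf (n m : ℕ) (c : ℝ) (x : EuclideanSpace ℝ (Fin n)) : ℝ :=
  -(c * Qf n m x ^ (c - 1))

theorem Qf_nonneg (n m : ℕ) (x : EuclideanSpace ℝ (Fin n)) : 0 ≤ Qf n m x :=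
  Finset.sum_nonneg fun i _ => by split_ifs <;> positivity

theorem Sf_nonneg (n m : ℕ) (x : EuclideanSpace ℝ (Fin n)) : 0 ≤ Sf n m x :=
  Finset.sum_nonneg fun i _ => by split_ifs <;> positivity

theorem continuous_Qf (n m : ℕ) : Continuous (Qf n m) := by
  unfold Qf
  refine continuous_finset_sum _ fun i _ => ?_
  by_cases hi : (i : ℕ) < n - m
  · simp only [if_pos hi]
    exact ((continuous_apply i).comp (PiLp.continuous_ofLp 2 _ : Continuous
      (⇑(WithLp.equiv 2 (Fin n → ℝ))))).pow 2
  · simp only [if_neg hi]; exact continuous_const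

theorem hasFDerivAt_Af (n m : ℕ) (c : ℝ) (x : EuclideanSpace ℝ (Fin n))
    (hq : 0 < Qf n m x) :
    HasFDerivAt (Af n m c) (Wf n m c x • LQ n m x + Vf n m c x • LS n m x) x := by
  have hd1 : HasDerivAt (fun t : ℝ => t ^ (c - 1)) ((c - 1) * Qf n m x ^ (c - 1 - 1))
      (Qf n m x) := Real.hasDerivAt_rpow_const (Or.inl hq.ne')
  have hd2 : HasDerivAt (fun t : ℝ => t ^ ((1:ℝ)/2 - 1))
      (((1:ℝ)/2 - 1) * Qf n m x ^ ((1:ℝ)/2 - 1 - 1)) (Qf n m x) :=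
    Real.hasDerivAt_rpow_const (Or.inl hq.ne')
  have h1 : HasFDerivAt (fun y => Qf n m y ^ (c - 1))
      (((c - 1) * Qf n m x ^ (c - 1 - 1)) • LQ n m x) x :=
    hd1.comp_hasFDerivAt x (hasFDerivAt_Qf n m x)
  have h2 : HasFDerivAt (fun y => Qf n m y ^ ((1:ℝ)/2 - 1))
      ((((1:ℝ)/2 - 1) * Qf n m x ^ ((1:ℝ)/2 - 1 - 1)) • LQ n m x) x :=
    hd2.comp_hasFDerivAt x (hasFDerivAt_Qf n m x)
  have h1S : HasFDerivAt (fun y => 1 - Sf n m y) (-LS n m x) x :=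
    (hasFDerivAt_Sf n m x).const_sub 1
  have hmul := h1S.mul (h1.const_mul c)
  have htot := hmul.add (h2.const_mul (1/2 : ℝ))
  have : Af n m c = fun y => (1 - Sf n m y) * (c * Qf n m y ^ (c - 1))
      + (1/2) * Qf n m y ^ ((1:ℝ)/2 - 1) := rfl
  rw [this]
  refine htot.congr_fderiv ?_
  ext y
  simp only [ContinuousLinearMap.add_apply, ContinuousLinearMap.smul_apply,
    ContinuousLinearMap.neg_apply, smul_eq_mul, Wf, Vf]
  ring

theorem hasFDerivAt_Bf (n m : ℕ) (c : ℝ) (x : EuclideanSpace ℝ (Fin n))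
    (hq : 0 < Qf n m x) :
    HasFDerivAt (Bf n m c) (Vf n m c x • LQ n m x) x := by
  have hd : HasDerivAt (fun t : ℝ => t ^ c) (c * Qf n m x ^ (c - 1)) (Qf n m x) :=
    Real.hasDerivAt_rpow_const (Or.inl hq.ne')
  have h1 : HasFDerivAt (fun y => Qf n m y ^ c) ((c * Qf n m x ^ (c - 1)) • LQ n m x) x :=
    hd.comp_hasFDerivAt x (hasFDerivAt_Qf n m x)
  have : Bf n m c = fun y => -(Qf n m y ^ c) := rfl
  rw [this]
  refine h1.neg.congr_fderiv ?_
  ext y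
  simp [Vf]

theorem hasFDerivAt_u (n m : ℕ) (c : ℝ) (x : EuclideanSpace ℝ (Fin n))
    (hq : 0 < Qf n m x) :
    HasFDerivAt (fun y => (1 - Sf n m y) * Qf n m y ^ c + Qf n m y ^ ((1:ℝ)/2))
      (Af n m c x • LQ n m x + Bf n m c x • LS n m x) x := by
  have hd1 : HasDerivAt (fun t : ℝ => t ^ c) (c * Qf n m x ^ (c - 1)) (Qf n m x) :=
    Real.hasDerivAt_rpow_const (Or.inl hq.ne')
  have hd2 : HasDerivAt (fun t : ℝ => t ^ ((1:ℝ)/2)) (((1:ℝ)/2) * Qf n m x ^ ((1:ℝ)/2 - 1))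
      (Qf n m x) := Real.hasDerivAt_rpow_const (Or.inl hq.ne')
  have h1 : HasFDerivAt (fun y => Qf n m y ^ c) ((c * Qf n m x ^ (c - 1)) • LQ n m x) x :=
    hd1.comp_hasFDerivAt x (hasFDerivAt_Qf n m x)
  have h2 : HasFDerivAt (fun y => Qf n m y ^ ((1:ℝ)/2))
      ((((1:ℝ)/2) * Qf n m x ^ ((1:ℝ)/2 - 1)) • LQ n m x) x :=
    hd2.comp_hasFDerivAt x (hasFDerivAt_Qf n m x)
  have h1S : HasFDerivAt (fun y => 1 - Sf n m y) (-LS n m x) x :=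
    (hasFDerivAt_Sf n m x).const_sub 1
  have htot := (h1S.mul h1).add h2
  refine htot.congr_fderiv ?_
  ext y
  simp only [ContinuousLinearMap.add_apply, ContinuousLinearMap.smul_apply,
    ContinuousLinearMap.neg_apply, smul_eq_mul, Af, Bf]
  ring

theorem pd_eq (n m : ℕ) (c : ℝ) (u : EuclideanSpace ℝ (Fin n) → ℝ)
    (hu' : u = fun y => (1 - Sf n m y) * Qf n m y ^ c + Qf n m y ^ ((1:ℝ)/2))
    (x : EuclideanSpace ℝ (Fin n)) (hq : 0 < Qf n m x) (j : Fin n) :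
    pd u j x = if (j : ℕ) < n - m then 2 * x j * Af n m c x else 2 * x j * Bf n m c x := by
  have h := hasFDerivAt_u n m c x hq
  rw [← hu'] at h
  rw [pd, h.fderiv]
  simp only [ContinuousLinearMap.add_apply, ContinuousLinearMap.smul_apply, smul_eq_mul,
    LQ_apply, LS_apply]
  split_ifs with hj <;> ring

theorem pd2_eq (n m : ℕ) (c : ℝ) (u : EuclideanSpace ℝ (Fin n) → ℝ)
    (hu' : u = fun y => (1 - Sf n m y) * Qf n m y ^ c + Qf n m y ^ ((1:ℝ)/2))
    (x : EuclideanSpace ℝ (Fin n)) (hq : 0 < Qf n m x) (i j : Fin n) :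
    pd2 u i j x = (if i = j then 2 * (if (j : ℕ) < n - m then Af n m c x else Bf n m c x) else 0)
      + 4 * x i * x j * (if (i : ℕ) < n - m
          then (if (j : ℕ) < n - m then Wf n m c x else Vf n m c x)
          else (if (j : ℕ) < n - m then Vf n m c x else 0)) := by
  have hUopen : IsOpen {y : EuclideanSpace ℝ (Fin n) | 0 < Qf n m y} :=
    isOpen_lt continuous_const (continuous_Qf n m)
  have hev : (fun y => pd u j y) =ᶠ[𝓝 x]
      (fun y => if (j : ℕ) < n - m then 2 * y j * Af n m c y else 2 * y j * Bf n m c y) :=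
    Filter.eventually_of_mem (hUopen.mem_nhds hq) (fun y hy => pd_eq n m c u hu' y hy j)
  rw [pd2, hev.fderiv_eq]
  have hprojj : HasFDerivAt (fun y : EuclideanSpace ℝ (Fin n) => 2 * y j)
      ((2:ℝ) • EuclideanSpace.proj (𝕜 := ℝ) j) x := by
    have := ((EuclideanSpace.proj (𝕜 := ℝ) j).hasFDerivAt (x := x)).const_mul (2:ℝ)
    simpa [PiLp.proj_apply] using this
  by_cases hj : (j : ℕ) < n - m
  · simp only [if_pos hj]
    have h := hprojj.fun_mul (hasFDerivAt_Af n m c x hq)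
    rw [h.fderiv]
    simp only [ContinuousLinearMap.add_apply, ContinuousLinearMap.smul_apply,
      smul_eq_mul, LQ_apply, LS_apply, PiLp.proj_apply, EuclideanSpace.single_apply]
    by_cases hij : i = j
    · subst hij
      simp only [if_pos rfl, if_pos hj]
      split_ifs <;> ring
    · rw [if_neg hij, if_neg (show ¬ j = i from fun h => hij h.symm)]
      split_ifs <;> ring
  · simp only [if_neg hj]
    have h := hprojj.fun_mul (hasFDerivAt_Bf n m c x hq)
    rw [h.fderiv]
    simp only [ContinuousLinearMap.add_apply, ContinuousLinearMap.smul_apply,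
      smul_eq_mul, LQ_apply, LS_apply, PiLp.proj_apply, EuclideanSpace.single_apply]
    by_cases hij : i = j
    · subst hij
      simp only [if_pos rfl, if_neg hj]
      split_ifs <;> ring
    · rw [if_neg hij, if_neg (show ¬ j = i from fun h => hij h.symm)]
      split_ifs <;> ring

theorem card_filter_lt (n k : ℕ) (hk : k ≤ n) :
    (Finset.univ.filter fun i : Fin n => (i : ℕ) < k).card = k := by
  have : (Finset.univ.filter fun i : Fin n => (i : ℕ) < k)
      = Finset.map (Fin.castLEEmb hk) Finset.univ := by
    ext i
    simp only [Finset.mem_filter, Finset.mem_univ, true_and, Finset.mem_map,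
      Fin.castLEEmb_apply]
    constructor
    · intro h; exact ⟨⟨(i : ℕ), h⟩, by ext; simp⟩
    · rintro ⟨a, rfl⟩; simpa using a.2
  rw [this, Finset.card_map, Finset.card_univ, Fintype.card_fin]

theorem sum_ite_one_lt (n k : ℕ) (hk : k ≤ n) :
    ∑ i : Fin n, (if (i : ℕ) < k then (1:ℝ) else 0) = k := by
  rw [Finset.sum_boole]
  rw [card_filter_lt n k hk]

theorem sum_ite_one_ge (n k : ℕ) (hk : k ≤ n) :
    ∑ i : Fin n, (if (i : ℕ) < k then (0:ℝ) else 1) = ((n - k : ℕ) : ℝ) := by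
  have h1 : ∀ i : Fin n, (if (i : ℕ) < k then (0:ℝ) else 1)
      = 1 - (if (i : ℕ) < k then (1:ℝ) else 0) := by intro i; split_ifs <;> ring
  rw [Finset.sum_congr rfl fun i _ => h1 i, Finset.sum_sub_distrib, sum_ite_one_lt n k hk]
  simp only [Finset.sum_const, Finset.card_univ, Fintype.card_fin, nsmul_eq_mul, mul_one]
  push_cast [Nat.cast_sub hk]
  ring

section sums

variable (n m : ℕ) (c : ℝ) (u : EuclideanSpace ℝ (Fin n) → ℝ)
  (x : EuclideanSpace ℝ (Fin n))

theorem lap_eq (hmn : m ≤ n)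
    (hu' : u = fun y => (1 - Sf n m y) * Qf n m y ^ c + Qf n m y ^ ((1:ℝ)/2))
    (hq : 0 < Qf n m x) :
    lap u x = 4 * Wf n m c x * Qf n m x + 2 * ((n - m : ℕ) : ℝ) * Af n m c x
      + 2 * (m : ℝ) * Bf n m c x := by
  rw [lap, Finset.sum_congr rfl (fun i _ => pd2_eq n m c u hu' x hq i i)]
  have key : ∀ i : Fin n,
      ((if i = i then 2 * (if (i : ℕ) < n - m then Af n m c x else Bf n m c x) else 0)
        + 4 * x i * x i * (if (i : ℕ) < n - m
            then (if (i : ℕ) < n - m then Wf n m c x else Vf n m c x)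
            else (if (i : ℕ) < n - m then Vf n m c x else 0)))
      = (4 * Wf n m c x) * (if (i : ℕ) < n - m then (x i)^2 else 0)
        + (2 * Af n m c x) * (if (i : ℕ) < n - m then (1:ℝ) else 0)
        + (2 * Bf n m c x) * (if (i : ℕ) < n - m then (0:ℝ) else 1) := by
    intro i
    simp only [if_pos rfl]
    split_ifs <;> ring
  rw [Finset.sum_congr rfl (fun i _ => key i)]
  simp only [Finset.sum_add_distrib, ← Finset.mul_sum]
  rw [sum_ite_one_lt n (n - m) (Nat.sub_le n m)]
  rw [sum_ite_one_ge n (n - m) (Nat.sub_le n m)]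
  have hQ : ∑ i : Fin n, (if (i : ℕ) < n - m then (x i)^2 else 0) = Qf n m x := rfl
  rw [hQ]
  have hmm : n - (n - m) = m := by omega
  rw [hmm]
  ring

theorem g2_eq
    (hu' : u = fun y => (1 - Sf n m y) * Qf n m y ^ c + Qf n m y ^ ((1:ℝ)/2))
    (hq : 0 < Qf n m x) :
    ∑ i, (pd u i x)^2 = 4 * (Af n m c x)^2 * Qf n m x + 4 * (Bf n m c x)^2 * Sf n m x := by
  rw [Finset.sum_congr rfl (fun i _ => by rw [pd_eq n m c u hu' x hq i])]
  have key : ∀ i : Fin n,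
      (if (i : ℕ) < n - m then 2 * x i * Af n m c x else 2 * x i * Bf n m c x)^2
      = (4 * (Af n m c x)^2) * (if (i : ℕ) < n - m then (x i)^2 else 0)
        + (4 * (Bf n m c x)^2) * (if (i : ℕ) < n - m then (0:ℝ) else (x i)^2) := by
    intro i; split_ifs <;> ring
  rw [Finset.sum_congr rfl (fun i _ => key i)]
  simp only [Finset.sum_add_distrib, ← Finset.mul_sum]
  have hQ : ∑ i : Fin n, (if (i : ℕ) < n - m then (x i)^2 else 0) = Qf n m x := rfl
  have hS : ∑ i : Fin n, (if (i : ℕ) < n - m then (0:ℝ) else (x i)^2) = Sf n m x := rfl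
  rw [hQ, hS]

theorem ilap_eq
    (hu' : u = fun y => (1 - Sf n m y) * Qf n m y ^ c + Qf n m y ^ ((1:ℝ)/2))
    (hq : 0 < Qf n m x) :
    ilap u x = 16 * (Af n m c x)^2 * (Qf n m x)^2 * Wf n m c x
      + 32 * Af n m c x * Bf n m c x * Qf n m x * Sf n m x * Vf n m c x
      + 8 * (Af n m c x)^3 * Qf n m x + 8 * (Bf n m c x)^3 * Sf n m x := by
  set A := Af n m c x with hA
  set B := Bf n m c x with hB
  set W := Wf n m c x with hW
  set V := Vf n m c x with hV
  have hQ : ∑ i : Fin n, (if (i : ℕ) < n - m then (x i)^2 else 0) = Qf n m x := rfl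
  have hS : ∑ i : Fin n, (if (i : ℕ) < n - m then (0:ℝ) else (x i)^2) = Sf n m x := rfl
  have inner : ∀ i : Fin n, ∑ j, pd u i x * pd u j x * pd2 u i j x
      = (if (i : ℕ) < n - m
          then (8*A^3 + 16*A^2*W*Qf n m x + 16*A*B*V*Sf n m x) * (x i)^2
          else (8*B^3 + 16*A*B*V*Qf n m x) * (x i)^2) := by
    intro i
    have key : ∀ j : Fin n, pd u i x * pd u j x * pd2 u i j x
        = (if i = j then
            (2 * (if (i : ℕ) < n - m then 4*(x i)^2*A^3 else 4*(x i)^2*B^3)) else 0)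
          + ((if (i : ℕ) < n - m then 16*(x i)^2*A^2*W else 16*(x i)^2*A*B*V))
              * (if (j : ℕ) < n - m then (x j)^2 else 0)
          + ((if (i : ℕ) < n - m then 16*(x i)^2*A*B*V else 0))
              * (if (j : ℕ) < n - m then (0:ℝ) else (x j)^2) := by
      intro j
      rw [pd_eq n m c u hu' x hq i, pd_eq n m c u hu' x hq j,
        pd2_eq n m c u hu' x hq i j]
      rcases eq_or_ne i j with rfl | hij
      · simp only [if_pos rfl]
        split_ifs <;> ring
      · rw [if_neg hij, if_neg hij]
        split_ifs <;> ring
    rw [Finset.sum_congr rfl (fun j _ => key j)]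
    simp only [Finset.sum_add_distrib, ← Finset.mul_sum]
    rw [Finset.sum_ite_eq Finset.univ i (fun _ => 2 * (if (i : ℕ) < n - m
      then 4*(x i)^2*A^3 else 4*(x i)^2*B^3))]
    rw [hQ, hS]
    simp only [Finset.mem_univ, if_true]
    split_ifs <;> ring
  rw [ilap, Finset.sum_congr rfl (fun i _ => inner i)]
  have key2 : ∀ i : Fin n, (if (i : ℕ) < n - m
        then (8*A^3 + 16*A^2*W*Qf n m x + 16*A*B*V*Sf n m x) * (x i)^2
        else (8*B^3 + 16*A*B*V*Qf n m x) * (x i)^2)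
      = (8*A^3 + 16*A^2*W*Qf n m x + 16*A*B*V*Sf n m x)
          * (if (i : ℕ) < n - m then (x i)^2 else 0)
        + (8*B^3 + 16*A*B*V*Qf n m x)
          * (if (i : ℕ) < n - m then (0:ℝ) else (x i)^2) := by
    intro i; split_ifs <;> ring
  rw [Finset.sum_congr rfl (fun i _ => key2 i)]
  simp only [Finset.sum_add_distrib, ← Finset.mul_sum]
  rw [hQ, hS]
  ring

end sums

set_option maxHeartbeats 1000000 in
theorem key_ineq (K M p β q s A B W V : ℝ)
    (hK : 2 ≤ K) (hM : 1 ≤ M) (hp2 : 2 < p)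
    (hβk : β * (p - 1) = p - K) (hβpos : 0 < β)
    (hq : 0 < q) (hs : 0 ≤ s) (hs1 : s < 1)
    (hδ : Real.sqrt q < min (1/2) ((K - 1)/(16*(M + p - 2))))
    (hA : A = (1 - s) * ((β/2) * q ^ ((β/2) - 1)) + (1/2) * q ^ ((1:ℝ)/2 - 1))
    (hB : B = -(q ^ (β/2)))
    (hW : W = (1 - s) * ((β/2) * (((β/2) - 1) * q ^ ((β/2) - 1 - 1)))
        + (1/2) * (((1:ℝ)/2 - 1) * q ^ ((1:ℝ)/2 - 1 - 1)))
    (hV : V = -((β/2) * q ^ ((β/2) - 1))) :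
    0 ≤ (4 * W * q + 2 * K * A + 2 * M * B) * (4 * A^2 * q + 4 * B^2 * s) / (p - 2)
      + (16 * A^2 * q^2 * W + 32 * A * B * q * s * V + 8 * A^3 * q + 8 * B^3 * s) := by
  have hp2' : (0:ℝ) < p - 2 := by linarith
  have hMp : (0:ℝ) < M + p - 2 := by linarith
  set R := Real.sqrt q with hRdef
  have hRpos : 0 < R := Real.sqrt_pos.mpr hq
  have hR2 : R^2 = q := Real.sq_sqrt hq.le
  have hRhalf : R < 1/2 := lt_of_lt_of_le hδ (min_le_left _ _)
  have hRb : R ≤ (K - 1)/(16*(M + p - 2)) := le_of_lt (lt_of_lt_of_le hδ (min_le_right _ _))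
  have hq1 : q < 1 := by
    have h := mul_lt_mul'' hRhalf hRhalf hRpos.le hRpos.le
    have h2 : R^2 = R*R := by ring
    linarith [hR2.symm.trans_lt (h2.trans_lt (by linarith : R*R < 1))]
  set P := q ^ (β/2) with hPdef
  have hPpos : 0 < P := Real.rpow_pos_of_pos hq _
  have hP1 : P ≤ 1 := Real.rpow_le_one hq.le hq1.le (by positivity)
  have e1 : q ^ ((β/2) - 1) = P / q := by rw [Real.rpow_sub hq, Real.rpow_one]
  have eR : q ^ ((1:ℝ)/2) = R := by rw [hRdef, Real.sqrt_eq_rpow]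
  have e2 : q ^ ((1:ℝ)/2 - 1) = R / q := by rw [Real.rpow_sub hq, Real.rpow_one, eR]
  have e3 : q ^ ((β/2) - 1 - 1) = P / q^2 := by
    rw [Real.rpow_sub hq, Real.rpow_sub hq, Real.rpow_one, div_div, ← pow_two]
  have e4 : q ^ ((1:ℝ)/2 - 1 - 1) = R / q^2 := by
    rw [Real.rpow_sub hq, Real.rpow_sub hq, Real.rpow_one, eR, div_div, ← pow_two]
  set a := β * (1 - s) * P / R with hadef
  have hs1' : (0:ℝ) ≤ 1 - s := by linarith
  have ha : 0 ≤ a := by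
    apply div_nonneg _ hRpos.le
    exact mul_nonneg (mul_nonneg hβpos.le hs1') hPpos.le
  have hA2 : A = (a + 1)/(2*R) := by
    rw [hA, e1, e2, hadef, ← hR2]
    field_simp
  have hW2 : W = ((β - 2)*a - 1)/(4*R^3) := by
    rw [hW, e3, e4, hadef, ← hR2]
    field_simp
    ring
  have hV2 : V = -(β*P)/(2*R^2) := by
    rw [hV, e1, ← hR2]
    field_simp
  have hzero : (β + K - 2) + (p - 2)*(β - 1) = 0 := by linear_combination hβk
  have hX : (4 * W * q + 2 * K * A + 2 * M * B) * (4 * A^2 * q + 4 * B^2 * s)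
      + (p - 2) * (16 * A^2 * q^2 * W + 32 * A * B * q * s * V + 8 * A^3 * q + 8 * B^3 * s)
      = ((a+1)^2*((K-1) - 2*M*(P*R)) + 4*s*P^2*((β+K-2)*a+(K-1))
          + 8*β*(p-2)*s*P^2*(a+1) - 8*(M+p-2)*(s*(P^3*R))
          + ((β + K - 2) + (p - 2)*(β - 1)) * (a*(a+1)^2)) / R := by
    rw [hA2, hB, hW2, hV2, ← hR2]
    field_simp
    ring
  have h6 : P*R ≤ R := by
    have := mul_le_mul_of_nonneg_right hP1 hRpos.le
    simpa using this
  have hP31 : P^3 ≤ 1 := pow_le_one₀ hPpos.le hP1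
  have h7 : P^3*R ≤ R := by
    have := mul_le_mul_of_nonneg_right hP31 hRpos.le
    simpa using this
  have h8 : R * (16*(M+p-2)) ≤ K - 1 := by
    rw [← le_div_iff₀ (by positivity)]
    exact hRb
  have h9 : (1:ℝ) ≤ (a+1)^2 := by
    have h : (1:ℝ) ≤ a + 1 := by linarith
    calc (1:ℝ) = 1*1 := by ring
      _ ≤ (a+1)*(a+1) := mul_le_mul h h one_pos.le (by linarith)
      _ = (a+1)^2 := by ring
  have h10 : (0:ℝ) ≤ β + K - 2 := by linarith
  have hMR : 16*M*(P*R) ≤ K - 1 := by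
    have t1 : 16*M*(P*R) ≤ 16*M*R :=
      mul_le_mul_of_nonneg_left h6 (by linarith : (0:ℝ) ≤ 16*M)
    have t2 : (0:ℝ) ≤ (p-2)*R := mul_nonneg hp2'.le hRpos.le
    linarith [t1, t2, h8]
  have hterm1 : (7/8)*(K-1) ≤ (K-1) - 2*M*(P*R) := by linarith [hMR]
  have hterm1' : (7/8)*(K-1) ≤ (a+1)^2*((K-1) - 2*M*(P*R)) := by
    have hprod := mul_nonneg (by linarith : (0:ℝ) ≤ (a+1)^2 - 1)
      (by linarith : (0:ℝ) ≤ (K-1) - 2*M*(P*R))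
    linarith [hprod, hterm1]
  have ht1 : s*(P^3*R) ≤ R := by
    have t0 : (0:ℝ) ≤ P^3*R := mul_nonneg (by positivity) hRpos.le
    have t1 : s*(P^3*R) ≤ 1*(P^3*R) := mul_le_mul_of_nonneg_right hs1.le t0
    linarith [h7]
  have hterm4 : 8*(M+p-2)*(s*(P^3*R)) ≤ (K-1)/2 := by
    have := mul_le_mul_of_nonneg_left ht1 (by linarith : (0:ℝ) ≤ 8*(M+p-2))
    linarith [h8]
  have hmida : (0:ℝ) ≤ (β+K-2)*a + (K-1) := by
    have := mul_nonneg h10 ha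
    linarith
  have hmid1 : (0:ℝ) ≤ 4*s*P^2*((β+K-2)*a+(K-1)) := by
    apply mul_nonneg _ hmida
    positivity
  have hmid2 : (0:ℝ) ≤ 8*β*(p-2)*s*P^2*(a+1) := by
    apply mul_nonneg _ (by linarith : (0:ℝ) ≤ a + 1)
    apply mul_nonneg _ (by positivity : (0:ℝ) ≤ P^2)
    apply mul_nonneg _ hs
    have := mul_nonneg hβpos.le hp2'.le
    linarith
  have hF : 0 ≤ (a+1)^2*((K-1) - 2*M*(P*R)) + 4*s*P^2*((β+K-2)*a+(K-1))
      + 8*β*(p-2)*s*P^2*(a+1) - 8*(M+p-2)*(s*(P^3*R))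
      + ((β + K - 2) + (p - 2)*(β - 1)) * (a*(a+1)^2) := by
    rw [hzero]
    have hK1 : (1:ℝ) ≤ K - 1 := by linarith
    linarith [hterm1', hmid1, hmid2, hterm4]
  have h5 : 0 ≤ (4 * W * q + 2 * K * A + 2 * M * B) * (4 * A^2 * q + 4 * B^2 * s)
      + (p - 2) * (16 * A^2 * q^2 * W + 32 * A * B * q * s * V + 8 * A^3 * q + 8 * B^3 * s) := by
    rw [hX]
    exact div_nonneg hF hRpos.le
  have hsplit : (4 * W * q + 2 * K * A + 2 * M * B) * (4 * A^2 * q + 4 * B^2 * s) / (p - 2)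
      + (16 * A^2 * q^2 * W + 32 * A * B * q * s * V + 8 * A^3 * q + 8 * B^3 * s)
      = ((4 * W * q + 2 * K * A + 2 * M * B) * (4 * A^2 * q + 4 * B^2 * s)
        + (p - 2) * (16 * A^2 * q^2 * W + 32 * A * B * q * s * V + 8 * A^3 * q + 8 * B^3 * s)) / (p - 2) := by
    field_simp
  rw [hsplit]
  exact div_nonneg h5 hp2'.le

/-- existence of `δ_c ∈ (0,1)` such that
`ǔ = (1 - |x''|²)|x'|^β + |x'|` satisfies `Δǔ |∇ǔ|²/(p-2) + Δ_∞ ǔ ≥ 0`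
on `{x : |x''| < 1, 0 < |x'| < δ_c}`. -/
theorem statement8 (n m : ℕ) (hm1 : 1 ≤ m) (hm2 : m ≤ n - 2) (hn : 2 ≤ n)
    (p : ℝ) (hp : (n : ℝ) - m < p) (hp2 : 2 < p)
    (β : ℝ) (hβ : β = (p - n + m) / (p - 1))
    (u : EuclideanSpace ℝ (Fin n) → ℝ)
    (hu : ∀ x, u x = (1 - (normS n m x) ^ 2) * normP n m x ^ β + normP n m x) :
    ∃ δc : ℝ, 0 < δc ∧ δc < 1 ∧
      ∀ x : EuclideanSpace ℝ (Fin n), normS n m x < 1 → 0 < normP n m x → normP n m x < δc →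
        0 ≤ lap u x * gradNorm u x ^ 2 / (p - 2) + ilap u x := by
  have hmn : m ≤ n := by omega
  have hkn : 2 ≤ n - m := by omega
  set K : ℝ := ((n - m : ℕ) : ℝ) with hKdef
  have hKval : K = (n : ℝ) - (m : ℝ) := by
    rw [hKdef, Nat.cast_sub hmn]
  have hK : (2:ℝ) ≤ K := by
    rw [hKdef]
    exact_mod_cast hkn
  have hM : (1:ℝ) ≤ (m:ℝ) := by exact_mod_cast hm1
  have hp1 : p - 1 ≠ 0 := by intro h; linarith [hp2]
  have hβk : β * (p - 1) = p - K := by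
    rw [hβ, hKval]
    field_simp
    ring
  have hβpos : 0 < β := by
    rw [hβ]
    apply div_pos _ (by linarith)
    have : (n:ℝ) - m < p := hp
    linarith
  have hMp : (0:ℝ) < (m:ℝ) + p - 2 := by linarith
  refine ⟨min (1/2 : ℝ) ((K - 1)/(16*((m:ℝ) + p - 2))), ?_, ?_, ?_⟩
  · apply lt_min (by norm_num)
    apply div_pos (by linarith) (by linarith)
  · exact lt_of_le_of_lt (min_le_left _ _) (by norm_num)
  · intro x hS1 hP0 hPδ
    have hq : 0 < Qf n m x := Real.sqrt_pos.mp hP0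
    have hsS : Sf n m x < 1 := by
      have h1 : normS n m x ^ 2 < 1 := pow_lt_one₀ (Real.sqrt_nonneg _) hS1 (by norm_num)
      have h2 : normS n m x ^ 2 = Sf n m x := Real.sq_sqrt (Sf_nonneg n m x)
      linarith [h2 ▸ h1]
    have hu'' : u = fun y => (1 - Sf n m y) * Qf n m y ^ (β/2) + Qf n m y ^ ((1:ℝ)/2) := by
      funext y
      rw [hu y]
      have h1 : normS n m y ^ 2 = Sf n m y := Real.sq_sqrt (Sf_nonneg n m y)
      have h2 : normP n m y ^ β = Qf n m y ^ (β/2) := by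
        show Real.sqrt (Qf n m y) ^ β = _
        rw [Real.sqrt_eq_rpow, ← Real.rpow_mul (Qf_nonneg n m y)]
        congr 1
        ring
      have h3 : normP n m y = Qf n m y ^ ((1:ℝ)/2) := by
        show Real.sqrt (Qf n m y) = _
        rw [Real.sqrt_eq_rpow]
      rw [h1, h2, h3]
    rw [lap_eq n m (β/2) u x hmn hu'' hq]
    rw [gradNorm, Real.sq_sqrt (Finset.sum_nonneg fun i _ => sq_nonneg _)]
    rw [g2_eq n m (β/2) u x hu'' hq]
    rw [ilap_eq n m (β/2) u x hu'' hq]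
    exact key_ineq K (m:ℝ) p β (Qf n m x) (Sf n m x)
      (Af n m (β/2) x) (Bf n m (β/2) x) (Wf n m (β/2) x) (Vf n m (β/2) x)
      hK hM hp2 hβk hβpos hq (Sf_nonneg n m x) hsS hPδ rfl rfl rfl rfl
end
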